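/- In the 1-dimensional Setup, suppose additionally that there exists θ ∈ [a,b] with θ > θ_SL and c(θ_SL, θ) = 1, and let θ₀ ∈ (a,b] be the unique point with Γ(θ₀) = 1/2. Then for every p ∈ (0,1) and every θ ∈ [a,b] with θ < θ_SL or θ ≥ θ₀, the point θ_SL is the unique global minimizer over [a,b] of θ' ↦ L_p(θ,θ'): for all θ' ∈ [a,b] with θ' ≠ θ_SL one has L_p(θ, θ_SL) < L_p(θ, θ'). (This is the mechanism behind the oscillation of repeated risk minimization between θ_SL and a threshold above θ_SL.) -/

import Mathlib

open MeasureTheory Set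

/-- Best response of an agent with features `x` to the threshold classifier `1{· ≥ θ}`
under a cost function `c` with utility `γ = 1` for positive classification. -/
noncomputable def bestResponse (c : ℝ → ℝ → ℝ) (θ x : ℝ) : ℝ :=
  if θ ≤ x then x else if c x θ ≤ 1 then θ else x

/-- Risk of the threshold `θ'` on the base (non-strategic) population. -/
noncomputable def nonStrategicRisk (β : Measure ℝ) (μ : ℝ → ℝ) (θ' : ℝ) : ℝ :=
  ∫ x, (if θ' ≤ x then 1 - μ x else μ x) ∂β

/-- Decoupled performative risk of the threshold `θ'` on the distribution induced by
deploying `θ` against agents following standard microfoundations. -/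
noncomputable def smRisk (β : Measure ℝ) (μ : ℝ → ℝ) (c : ℝ → ℝ → ℝ) (θ θ' : ℝ) : ℝ :=
  ∫ x, (if θ' ≤ bestResponse c θ x then 1 - μ x else μ x) ∂β

/-- Decoupled performative risk for a mixture of a `p` fraction of non-strategic agents
and a `1 - p` fraction of agents following standard microfoundations. -/
noncomputable def mixRisk (β : Measure ℝ) (μ : ℝ → ℝ) (c : ℝ → ℝ → ℝ) (p θ θ' : ℝ) : ℝ :=
  p * nonStrategicRisk β μ θ' + (1 - p) * smRisk β μ c θ θ'

/-- `θ` is locally (performatively) stable: it is a local minimum on `[a,b]` of the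
decoupled performative risk `θ' ↦ L_p(θ, θ')`, or that map is differentiable at `θ`
with derivative `0`. -/
def LocallyStable (β : Measure ℝ) (μ : ℝ → ℝ) (c : ℝ → ℝ → ℝ) (a b p θ : ℝ) : Prop :=
  IsLocalMinOn (fun θ' => mixRisk β μ c p θ θ') (Icc a b) θ ∨
    HasDerivAt (fun θ' => mixRisk β μ c p θ θ') 0 θ

/-- The set of agents who game to the threshold `θ`. -/
def Qset (c : ℝ → ℝ → ℝ) (a b θ : ℝ) : Set ℝ := {x | x ∈ Icc a b ∧ x < θ ∧ c x θ ≤ 1}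

/-- Average of `μ` over the gaming set `Q(θ)`. -/
noncomputable def Gam (β : Measure ℝ) (μ : ℝ → ℝ) (c : ℝ → ℝ → ℝ) (a b θ : ℝ) : ℝ :=
  (∫ x in Qset c a b θ, μ x ∂β) / (β (Qset c a b θ)).toReal

/-- Proposition 2(c) (mechanism of the oscillation of repeated risk
minimization): for any p ∈ (0,1) and any deployed θ with θ < θ_SL or θ ≥ θ₀, the unique
global minimizer of θ' ↦ L_p(θ,θ') over [a,b] is θ_SL. -/
theorem stmt5
    (a b : ℝ) (hab : a < b)
    (c : ℝ → ℝ → ℝ) (hc_cont : Continuous fun p : ℝ × ℝ => c p.1 p.2)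
    (hc_zero : ∀ x, c x x = 0)
    (hc_between : ∀ x xP z : ℝ, min x xP < z → z < max x xP →
      c x z < c x xP ∧ c z x < c xP x)
    (g : ℝ → ℝ) (hg_cont : ContinuousOn g (Icc a b)) (hg_pos : ∀ x ∈ Icc a b, 0 < g x)
    (β : Measure ℝ)
    (hβ : β = (volume.restrict (Icc a b)).withDensity fun x => ENNReal.ofReal (g x))
    (hβprob : IsProbabilityMeasure β)
    (μ : ℝ → ℝ) (hμ_cont : ContinuousOn μ (Icc a b)) (hμ_mono : StrictMonoOn μ (Icc a b))
    (hμ_range : ∀ x ∈ Icc a b, μ x ∈ Icc (0:ℝ) 1)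
    (θSL : ℝ) (hθSL : θSL ∈ Ioo a b) (hhalf : μ θSL = 1/2)
    (hexists : ∃ θ ∈ Icc a b, θSL < θ ∧ c θSL θ = 1)
    (θ₀ : ℝ) (hθ₀mem : θ₀ ∈ Ioc a b) (hθ₀Γ : Gam β μ c a b θ₀ = 1/2)
    (hθ₀uniq : ∀ θ₁ ∈ Ioc a b, Gam β μ c a b θ₁ = 1/2 → θ₁ = θ₀) :
    ∀ p ∈ Ioo (0:ℝ) 1, ∀ θ ∈ Icc a b, (θ < θSL ∨ θ₀ ≤ θ) →
      ∀ θ' ∈ Icc a b, θ' ≠ θSL →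
        mixRisk β μ c p θ θSL < mixRisk β μ c p θ θ' := by
  have hIccSL : θSL ∈ Icc a b := ⟨hθSL.1.le, hθSL.2.le⟩
  have hθ₀Icc : θ₀ ∈ Icc a b := ⟨hθ₀mem.1.le, hθ₀mem.2⟩
  have hmono : MonotoneOn μ (Icc a b) := hμ_mono.monotoneOn
  -- clamp function
  set cl : ℝ → ℝ := fun x => max a (min b x) with hcl
  have hcl_cont : Continuous cl := continuous_const.max (continuous_const.min continuous_id)
  have hcl_mem : ∀ x, cl x ∈ Icc a b :=
    fun x => ⟨le_max_left _ _, max_le hab.le (min_le_left _ _)⟩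
  have hcl_eq : ∀ x ∈ Icc a b, cl x = x := by
    intro x hx
    simp only [hcl]
    rw [min_eq_right hx.2, max_eq_right hx.1]
  -- β is null outside [a,b]
  have hβnull : β (Icc a b)ᶜ = 0 := by
    rw [hβ, withDensity_apply _ measurableSet_Icc.compl,
      Measure.restrict_restrict measurableSet_Icc.compl, compl_inter_self,
      Measure.restrict_empty, lintegral_zero_measure]
  have hae : ∀ᵐ x ∂β, x ∈ Icc a b := by
    rw [ae_iff]
    exact hβnull
  -- integrability
  set f : ℝ → ℝ := fun x => 1 - 2 * μ x with hf
  have hμae : (fun x => μ (cl x)) =ᵐ[β] μ := hae.mono fun x hx => by show μ (cl x) = μ x; rw [hcl_eq x hx]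
  have hIntμ : Integrable μ β := by
    refine (Integrable.mono' (integrable_const (1:ℝ))
      ((hμ_cont.comp_continuous hcl_cont hcl_mem).aestronglyMeasurable)
      (Filter.Eventually.of_forall fun x => ?_)).congr hμae
    have h := hμ_range (cl x) (hcl_mem x)
    simp only [Function.comp]
    rw [Real.norm_eq_abs, abs_le]
    constructor <;> linarith [h.1, h.2]
  have hIntf : Integrable f β := by
    have : f = fun x => 1 - 2 * μ x := rfl
    rw [this]
    exact (integrable_const (1:ℝ)).sub (hIntμ.const_mul 2)
  -- the J functional
  set J : Set ℝ → ℝ := fun s => ∫ x in s, f x ∂β with hJ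
  have hJ_union : ∀ s t : Set ℝ, MeasurableSet t → Disjoint s t → J (s ∪ t) = J s + J t :=
    fun s t ht hd => setIntegral_union hd ht hIntf.integrableOn hIntf.integrableOn
  have hJpos : ∀ s : Set ℝ, MeasurableSet s → s ⊆ Iio θSL → 0 ≤ J s := by
    intro s hs hsub
    apply setIntegral_nonneg_of_ae_restrict
    filter_upwards [ae_restrict_of_ae hae, ae_restrict_mem hs] with x hx hxs
    have h1 : μ x ≤ μ θSL := hmono hx hIccSL (hsub hxs).le
    rw [hhalf] at h1
    simp only [hf, Pi.zero_apply]
    linarith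
  have hJneg : ∀ s : Set ℝ, MeasurableSet s → s ⊆ Ici θSL → J s ≤ 0 := by
    intro s hs hsub
    apply setIntegral_nonpos_of_ae_restrict
    filter_upwards [ae_restrict_of_ae hae, ae_restrict_mem hs] with x hx hxs
    have h1 : μ θSL ≤ μ x := hmono hIccSL hx (hsub hxs)
    rw [hhalf] at h1
    simp only [hf, Pi.zero_apply]
    linarith
  -- positivity of β on subintervals
  have hbetaIco : ∀ u v : ℝ, a ≤ u → u < v → v ≤ b → 0 < β (Ico u v) := by
    intro u v hau huv hvb
    have hsub : Ico u v ∩ Icc a b = Ico u v :=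
      inter_eq_left.2 fun x hx => ⟨hau.trans hx.1, hx.2.le.trans hvb⟩
    rw [hβ, withDensity_apply _ measurableSet_Ico,
      Measure.restrict_restrict measurableSet_Ico, hsub]
    obtain ⟨z, hz, hzmin⟩ := (isCompact_Icc (a := u) (b := v)).exists_isMinOn
      ⟨u, left_mem_Icc.2 huv.le⟩
      (hg_cont.mono (Icc_subset_Icc hau hvb))
    have hgz : 0 < g z := hg_pos z ⟨hau.trans hz.1, hz.2.trans hvb⟩
    calc (0:ENNReal) < ENNReal.ofReal (g z) * volume (Ico u v) := by
          rw [Real.volume_Ico]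
          exact ENNReal.mul_pos (by simpa using hgz) (by simp [huv, sub_pos.2 huv])
      _ = ∫⁻ _ in Ico u v, ENNReal.ofReal (g z) ∂volume := by rw [setLIntegral_const]
      _ ≤ ∫⁻ x in Ico u v, ENNReal.ofReal (g x) ∂volume := by
          refine setLIntegral_mono' measurableSet_Ico fun x hx => ?_
          exact ENNReal.ofReal_le_ofReal (hzmin ⟨hx.1, hx.2.le⟩)
  -- splitting Ici
  have hIciSplit : ∀ u v : ℝ, u ≤ v → J (Ici u) = J (Ico u v) + J (Ici v) := by
    intro u v huv
    rw [← hJ_union (Ico u v) (Ici v) measurableSet_Ici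
      (disjoint_left.2 fun x hx hx2 => absurd hx2 (not_le.2 hx.2)),
      Ico_union_Ici_eq_Ici huv]
  -- strict sign of J on intervals around θSL
  have hJIcoPos : ∀ u : ℝ, a ≤ u → u < θSL → 0 < J (Ico u θSL) := by
    intro u hau huSL
    set m := (u + θSL) / 2 with hm
    have hm1 : u < m := by rw [hm]; linarith
    have hm2 : m < θSL := by rw [hm]; linarith
    have hmIcc : m ∈ Icc a b := ⟨hau.trans hm1.le, hm2.le.trans hθSL.2.le⟩
    have hε : 0 < 1 - 2 * μ m := by
      have := hμ_mono hmIcc hIccSL hm2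
      rw [hhalf] at this; linarith
    have hsplit : J (Ico u θSL) = J (Ico u m) + J (Ico m θSL) := by
      rw [← hJ_union (Ico u m) (Ico m θSL) measurableSet_Ico
        (disjoint_left.2 fun x hx hx2 => absurd hx2.1 (not_le.2 hx.2)),
        Ico_union_Ico_eq_Ico hm1.le hm2.le]
    have h2 : 0 ≤ J (Ico m θSL) := hJpos _ measurableSet_Ico fun x hx => hx.2
    have h1 : (1 - 2 * μ m) * (β (Ico u m)).toReal ≤ J (Ico u m) := by
      have hb : ∫ x in Ico u m, (1 - 2 * μ m) ∂β ≤ ∫ x in Ico u m, f x ∂β := by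
        refine setIntegral_mono_on (integrableOn_const (measure_ne_top β _) enorm_ne_top)
          hIntf.integrableOn measurableSet_Ico fun x hx => ?_
        have hxIcc : x ∈ Icc a b := ⟨hau.trans hx.1, (hx.2.trans hm2).le.trans hθSL.2.le⟩
        have : μ x ≤ μ m := hmono hxIcc hmIcc hx.2.le
        simp only [hf]; linarith
      rwa [setIntegral_const, smul_eq_mul, measureReal_def, mul_comm] at hb
    have hpos : 0 < (β (Ico u m)).toReal :=
      ENNReal.toReal_pos (hbetaIco u m hau hm1 (hm2.le.trans hθSL.2.le)).ne'
        (measure_ne_top β _)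
    nlinarith
  have hJIcoNeg : ∀ u : ℝ, θSL < u → u ≤ b → J (Ico θSL u) < 0 := by
    intro u huSL hub
    set m := (θSL + u) / 2 with hm
    have hm1 : θSL < m := by rw [hm]; linarith
    have hm2 : m < u := by rw [hm]; linarith
    have hmIcc : m ∈ Icc a b := ⟨hθSL.1.le.trans hm1.le, hm2.le.trans hub⟩
    have hε : 1 - 2 * μ m < 0 := by
      have := hμ_mono hIccSL hmIcc hm1
      rw [hhalf] at this; linarith
    have hsplit : J (Ico θSL u) = J (Ico θSL m) + J (Ico m u) := by
      rw [← hJ_union (Ico θSL m) (Ico m u) measurableSet_Ico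
        (disjoint_left.2 fun x hx hx2 => absurd hx2.1 (not_le.2 hx.2)),
        Ico_union_Ico_eq_Ico hm1.le hm2.le]
    have h2 : J (Ico θSL m) ≤ 0 := hJneg _ measurableSet_Ico fun x hx => hx.1
    have h1 : J (Ico m u) ≤ (1 - 2 * μ m) * (β (Ico m u)).toReal := by
      have hb : ∫ x in Ico m u, f x ∂β ≤ ∫ x in Ico m u, (1 - 2 * μ m) ∂β := by
        refine setIntegral_mono_on hIntf.integrableOn
          (integrableOn_const (measure_ne_top β _) enorm_ne_top) measurableSet_Ico
          fun x hx => ?_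
        have hxIcc : x ∈ Icc a b := ⟨hθSL.1.le.trans (hm1.le.trans hx.1), hx.2.le.trans hub⟩
        have : μ m ≤ μ x := hmono hmIcc hxIcc hx.1
        simp only [hf]; linarith
      rwa [setIntegral_const, smul_eq_mul, measureReal_def, mul_comm] at hb
    have hpos : 0 < (β (Ico m u)).toReal :=
      ENNReal.toReal_pos (hbetaIco m u (hθSL.1.le.trans hm1.le) hm2 hub).ne'
        (measure_ne_top β _)
    nlinarith
  -- the D lemma
  have hD : ∀ u ∈ Icc a b, u ≠ θSL → 0 < J (Ici u) - J (Ici θSL) := by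
    intro u hu hne
    rcases hne.lt_or_gt with h | h
    · have := hIciSplit u θSL h.le
      have h2 := hJIcoPos u hu.1 h
      linarith
    · have := hIciSplit θSL u h.le
      have h2 := hJIcoNeg u h hu.2
      linarith
  have hD0 : ∀ u ∈ Icc a b, 0 ≤ J (Ici u) - J (Ici θSL) := by
    intro u hu
    by_cases h : u = θSL
    · rw [h]; simp
    · exact (hD u hu h).le
  -- measurability of the gaming set
  have hmeasQ : ∀ t : ℝ, MeasurableSet {x : ℝ | x < t ∧ c x t ≤ 1} := by
    intro t
    have hcx : Continuous fun x : ℝ => c x t :=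
      hc_cont.comp (continuous_id.prodMk continuous_const)
    exact measurableSet_Iio.inter ((isClosed_le hcx continuous_const).measurableSet)
  -- core rewriting lemma
  have hCore : ∀ (S : Set ℝ), MeasurableSet S → ∀ r : ℝ → ℝ,
      (∀ x, r x = μ x + S.indicator f x) →
      ∫ x, r x ∂β = (∫ x, μ x ∂β) + J S := by
    intro S hS r hr
    rw [funext hr, integral_add hIntμ (hIntf.indicator hS), integral_indicator hS]
  have hNS : ∀ u : ℝ, nonStrategicRisk β μ u = (∫ x, μ x ∂β) + J (Ici u) := by
    intro u
    refine hCore (Ici u) measurableSet_Ici _ fun x => ?_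
    by_cases h : u ≤ x
    · rw [indicator_of_mem (mem_Ici.2 h) f, if_pos h]; simp only [hf]; ring
    · rw [indicator_of_notMem (fun hm => h (mem_Ici.1 hm)) f, if_neg h, add_zero]
  have hSM1 : ∀ t u : ℝ, u ≤ t →
      smRisk β μ c t u = (∫ x, μ x ∂β) + J (Ici u) + J ({x : ℝ | x < t ∧ c x t ≤ 1} ∩ Iio u) := by
    intro t u hut
    set Q : Set ℝ := {x : ℝ | x < t ∧ c x t ≤ 1} with hQdef
    have hSmeas : MeasurableSet (Ici u ∪ Q ∩ Iio u) :=
      measurableSet_Ici.union ((hmeasQ t).inter measurableSet_Iio)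
    have hmem : ∀ x : ℝ, u ≤ bestResponse c t x ↔ x ∈ Ici u ∪ Q ∩ Iio u := by
      intro x
      unfold bestResponse
      by_cases h1 : t ≤ x
      · rw [if_pos h1]
        constructor
        · intro h; exact Or.inl h
        · rintro (h | ⟨hQ, hlt⟩)
          · exact h
          · exact absurd h1 (not_le.2 hQ.1)
      · rw [if_neg h1]
        by_cases h2 : c x t ≤ 1
        · rw [if_pos h2]
          constructor
          · intro _
            rcases le_or_gt u x with h3 | h3
            · exact Or.inl h3
            · exact Or.inr ⟨⟨not_le.1 h1, h2⟩, h3⟩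
          · intro _; exact hut
        · rw [if_neg h2]
          constructor
          · intro h; exact Or.inl h
          · rintro (h | ⟨hQ, _⟩)
            · exact h
            · exact absurd hQ.2 h2
    have := hCore (Ici u ∪ Q ∩ Iio u) hSmeas
      (fun x => if u ≤ bestResponse c t x then 1 - μ x else μ x) ?_
    · rw [smRisk, this, hJ_union (Ici u) (Q ∩ Iio u)
        ((hmeasQ t).inter measurableSet_Iio)
        (disjoint_left.2 fun x hx hx2 => absurd (mem_Ici.1 hx) (not_le.2 hx2.2)), add_assoc]
    · intro x
      show (if u ≤ bestResponse c t x then 1 - μ x else μ x) = _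
      by_cases h : u ≤ bestResponse c t x
      · rw [if_pos h, indicator_of_mem ((hmem x).1 h) f]; simp only [hf]; ring
      · rw [if_neg h, indicator_of_notMem (fun hmem' => h ((hmem x).2 hmem')) f, add_zero]
  have hSM2 : ∀ t u : ℝ, t < u →
      smRisk β μ c t u = (∫ x, μ x ∂β) + J (Ici u) := by
    intro t u htu
    have hmem : ∀ x : ℝ, u ≤ bestResponse c t x ↔ x ∈ Ici u := by
      intro x
      unfold bestResponse
      by_cases h1 : t ≤ x
      · rw [if_pos h1]; rfl
      · rw [if_neg h1]
        by_cases h2 : c x t ≤ 1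
        · rw [if_pos h2]
          constructor
          · intro h; exact absurd htu (not_lt.2 h)
          · intro h; exact absurd (lt_of_not_ge h1) (not_lt.2 (htu.le.trans h))
        · rw [if_neg h2]; rfl
    have := hCore (Ici u) measurableSet_Ici
      (fun x => if u ≤ bestResponse c t x then 1 - μ x else μ x) ?_
    · rw [smRisk, this]
    · intro x
      show (if u ≤ bestResponse c t x then 1 - μ x else μ x) = _
      by_cases h : u ≤ bestResponse c t x
      · rw [if_pos h, indicator_of_mem ((hmem x).1 h) f]; simp only [hf]; ring
      · rw [if_neg h, indicator_of_notMem (fun hmem' => h ((hmem x).2 hmem')) f, add_zero]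
  -- facts from Γ(θ₀) = 1/2
  have hQsetMeas : ∀ t : ℝ, MeasurableSet (Qset c a b t) := by
    intro t
    have he : Qset c a b t = Icc a b ∩ {x | x < t ∧ c x t ≤ 1} := by
      ext x; simp [Qset, mem_inter_iff, mem_setOf_eq, and_assoc]
    rw [he]; exact measurableSet_Icc.inter (hmeasQ t)
  simp only [Gam] at hθ₀Γ
  set A := Qset c a b θ₀ with hA
  have hAmeas := hQsetMeas θ₀
  have hβA0 : (β A).toReal ≠ 0 := by
    intro h
    rw [h, div_zero] at hθ₀Γ
    norm_num at hθ₀Γ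
  have hβApos : 0 < (β A).toReal := lt_of_le_of_ne ENNReal.toReal_nonneg (Ne.symm hβA0)
  have hIA : ∫ x in A, μ x ∂β = (β A).toReal / 2 := by
    rw [div_eq_iff hβA0] at hθ₀Γ
    rw [hθ₀Γ]; ring
  have hf3 : 1/2 ≤ μ θ₀ := by
    have hb1 : ∫ x in A, μ x ∂β ≤ ∫ x in A, μ θ₀ ∂β :=
      setIntegral_mono_on hIntμ.integrableOn
        (integrableOn_const (measure_ne_top β _) enorm_ne_top) hAmeas
        (fun x hx => hmono hx.1 hθ₀Icc hx.2.1.le)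
    rw [setIntegral_const, smul_eq_mul, measureReal_def, hIA] at hb1
    nlinarith
  have hθSLθ₀ : θSL ≤ θ₀ := by
    by_contra h
    have := hμ_mono hθ₀Icc hIccSL (not_le.1 h)
    rw [hhalf] at this; linarith
  -- the Γ lemma : J (gaming set) ≤ 0 for t ≥ θ₀
  have hGamma : ∀ t ∈ Icc a b, θ₀ ≤ t → J {x : ℝ | x < t ∧ c x t ≤ 1} ≤ 0 := by
    intro t ht hθ₀t
    have hQae : J {x : ℝ | x < t ∧ c x t ≤ 1} = J (Qset c a b t) := by
      apply setIntegral_congr_set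
      rw [Filter.eventuallyEq_set]
      filter_upwards [hae] with x hx
      show (x < t ∧ c x t ≤ 1) ↔ (x ∈ Icc a b ∧ x < t ∧ c x t ≤ 1)
      simp [hx]
    rw [hQae]
    set B := Qset c a b t with hB
    have hBmeas := hQsetMeas t
    set L := A \ B with hL
    set M := A ∩ B with hM
    set H := B \ A with hH
    have hLmeas : MeasurableSet L := hAmeas.diff hBmeas
    have hMmeas : MeasurableSet M := hAmeas.inter hBmeas
    have hHmeas : MeasurableSet H := hBmeas.diff hAmeas
    have hkey : ∀ x ∈ L, ∀ y ∈ M, x ≤ y := by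
      intro x hx y hy
      by_contra hxy
      have hyx : y < x := not_le.1 hxy
      have hxA : x ∈ A := hx.1
      have hyB : y ∈ B := hy.2
      have hxt : x < t := lt_of_lt_of_le hxA.2.1 hθ₀t
      have hcx : c x t < c y t := by
        refine (hc_between t y x ?_ ?_).2
        · exact lt_of_le_of_lt (min_le_right t y) hyx
        · exact lt_of_lt_of_le hxt (le_max_left t y)
      exact hx.2 ⟨hxA.1, hxt, (hcx.trans_le hyB.2.2).le⟩
    have hHge : ∀ x ∈ H, θ₀ ≤ x := by
      intro x hx
      by_contra h
      have hxθ₀ : x < θ₀ := not_le.1 h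
      have hxB : x ∈ B := hx.1
      refine hx.2 ⟨hxB.1, hxθ₀, ?_⟩
      rcases eq_or_lt_of_le hθ₀t with he | hlt
      · rw [he]; exact hxB.2.2
      · refine ((hc_between x t θ₀ ?_ ?_).1.trans_le hxB.2.2).le
        · exact lt_of_le_of_lt (min_le_left x t) hxθ₀
        · exact lt_of_lt_of_le hlt (le_max_right x t)
    set IL := ∫ x in L, μ x ∂β with hILdef
    set IM := ∫ x in M, μ x ∂β with hIMdef
    set IH := ∫ x in H, μ x ∂β with hIHdef
    have hdisLM : Disjoint L M := disjoint_left.2 fun x hx hx2 => hx.2 hx2.2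
    have hdisMH : Disjoint M H := disjoint_left.2 fun x hx hx2 => hx2.2 hx.1
    have hALM : L ∪ M = A := diff_union_inter A B
    have hBMH : M ∪ H = B := by
      rw [hM, hH, inter_comm]
      exact inter_union_diff B A
    have hILM : IL + IM = (β A).toReal / 2 := by
      rw [hILdef, hIMdef,
        ← setIntegral_union hdisLM hMmeas hIntμ.integrableOn hIntμ.integrableOn, hALM, hIA]
    have hβALM : (β A).toReal = (β L).toReal + (β M).toReal := by
      rw [← hALM, measure_union hdisLM hMmeas,
        ENNReal.toReal_add (measure_ne_top β _) (measure_ne_top β _)]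
    have hβBMH : (β B).toReal = (β M).toReal + (β H).toReal := by
      rw [← hBMH, measure_union hdisMH hHmeas,
        ENNReal.toReal_add (measure_ne_top β _) (measure_ne_top β _)]
    have hIB : ∫ x in B, μ x ∂β = IM + IH := by
      rw [hIMdef, hIHdef,
        ← setIntegral_union hdisMH hHmeas hIntμ.integrableOn hIntμ.integrableOn, hBMH]
    have hLM2 : IL * (β M).toReal ≤ IM * (β L).toReal := by
      rcases M.eq_empty_or_nonempty with hMe | hMne
      · have h1 : IM = 0 := by rw [hIMdef, hMe, setIntegral_empty]
        have h2 : (β M).toReal = 0 := by rw [hMe]; simp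
        rw [h1, h2, mul_zero, zero_mul]
      · obtain ⟨y₀, hy₀⟩ := hMne
        set r := sInf M with hr
        have hbdd : BddBelow M := ⟨a, fun y hy => hy.1.1.1⟩
        have hra : a ≤ r := le_csInf ⟨y₀, hy₀⟩ fun y hy => hy.1.1.1
        have hrb : r ≤ b := (csInf_le hbdd hy₀).trans hy₀.1.1.2
        have hrIcc : r ∈ Icc a b := ⟨hra, hrb⟩
        have hIL2 : IL ≤ μ r * (β L).toReal := by
          have h3 := setIntegral_mono_on hIntμ.integrableOn
            (integrableOn_const (measure_ne_top β _) enorm_ne_top) hLmeas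
            (fun x hx => hmono hx.1.1 hrIcc
              (le_csInf ⟨y₀, hy₀⟩ fun y hy => hkey x hx y hy))
          rwa [setIntegral_const, smul_eq_mul, measureReal_def, mul_comm] at h3
        have hIM3 : μ r * (β M).toReal ≤ IM := by
          have h3 := setIntegral_mono_on
            (integrableOn_const (measure_ne_top β _) enorm_ne_top)
            hIntμ.integrableOn hMmeas
            (fun y hy => hmono hrIcc hy.1.1 (csInf_le hbdd hy))
          rwa [setIntegral_const, smul_eq_mul, measureReal_def, mul_comm] at h3
        have hμr0 : 0 ≤ μ r := (hμ_range r hrIcc).1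
        calc IL * (β M).toReal ≤ μ r * (β L).toReal * (β M).toReal :=
              mul_le_mul_of_nonneg_right hIL2 ENNReal.toReal_nonneg
          _ = μ r * (β M).toReal * (β L).toReal := by ring
          _ ≤ IM * (β L).toReal :=
              mul_le_mul_of_nonneg_right hIM3 ENNReal.toReal_nonneg
    have hIMhalf : (β M).toReal / 2 ≤ IM := by
      have h1 : (β M).toReal / 2 * (β A).toReal ≤ IM * (β A).toReal := by
        have h2 : (IL + IM) * (β M).toReal = (β A).toReal / 2 * (β M).toReal := by
          rw [hILM]
        rw [hβALM] at h2 ⊢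
        nlinarith [hLM2, h2]
      exact le_of_mul_le_mul_right h1 hβApos
    have hIHhalf : (β H).toReal / 2 ≤ IH := by
      have h3 := setIntegral_mono_on
        (integrableOn_const (measure_ne_top β _) enorm_ne_top)
        hIntμ.integrableOn hHmeas
        (fun x hx => hf3.trans (hmono hθ₀Icc hx.1.1 (hHge x hx)))
      rw [setIntegral_const, smul_eq_mul, measureReal_def] at h3
      linarith
    have hJB : J B = (β B).toReal - 2 * ∫ x in B, μ x ∂β := by
      have h1 : J B = ∫ x in B, ((1:ℝ) - 2 * μ x) ∂β := rfl
      rw [h1, integral_sub (show Integrable (fun _ => (1:ℝ)) (β.restrict B) from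
          integrableOn_const (measure_ne_top β _) enorm_ne_top)
        (hIntμ.integrableOn.const_mul 2), integral_const_mul, setIntegral_const,
        smul_eq_mul, measureReal_def, mul_one]
    rw [hJB, hIB]
    linarith [hβBMH]
  -- main body
  intro p hp θ hθ hcase θ' hθ'Icc hne
  have hd := hD θ' hθ'Icc hne
  have hQm : MeasurableSet {x : ℝ | x < θ ∧ c x θ ≤ 1} := hmeasQ θ
  have hsplitQ : ∀ s : Set ℝ, MeasurableSet s →
      J s = J (s ∩ {x : ℝ | x < θ ∧ c x θ ≤ 1}) + J (s \ {x : ℝ | x < θ ∧ c x θ ≤ 1}) := by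
    intro s hs
    rw [← hJ_union _ _ (hs.diff hQm)
      (disjoint_left.2 fun x hx hx2 => hx2.2 hx.2), inter_union_diff]
  have hQIio : ∀ u v : ℝ, u ≤ v →
      J ({x : ℝ | x < θ ∧ c x θ ≤ 1} ∩ Iio v) =
        J ({x : ℝ | x < θ ∧ c x θ ≤ 1} ∩ Iio u) +
          J ({x : ℝ | x < θ ∧ c x θ ≤ 1} ∩ Ico u v) := by
    intro u v huv
    rw [← hJ_union _ _ (hQm.inter measurableSet_Ico)
      (disjoint_left.2 fun x hx hx2 => absurd hx2.2.1 (not_le.2 hx.2)),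
      ← inter_union_distrib_left, Iio_union_Ico_eq_Iio huv]
  have hsm : smRisk β μ c θ θSL ≤ smRisk β μ c θ θ' := by
    rcases hcase with hθlt | hθ₀le
    · rw [hSM2 θ θSL hθlt]
      rcases le_or_gt θ' θ with h1 | h1
      · rw [hSM1 θ θ' h1]
        have h2 : 0 ≤ J ({x : ℝ | x < θ ∧ c x θ ≤ 1} ∩ Iio θ') :=
          hJpos _ (hQm.inter measurableSet_Iio) fun x hx => lt_trans hx.1.1 hθlt
        have h3 := hD0 θ' hθ'Icc
        linarith
      · rw [hSM2 θ θ' h1]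
        have h3 := hD0 θ' hθ'Icc
        linarith
    · have hSLθ : θSL ≤ θ := hθSLθ₀.trans hθ₀le
      have hγ : J {x : ℝ | x < θ ∧ c x θ ≤ 1} ≤ 0 := hGamma θ hθ hθ₀le
      rw [hSM1 θ θSL hSLθ]
      rcases le_or_gt θ' θ with h1 | h1
      · rw [hSM1 θ θ' h1]
        rcases le_or_gt θ' θSL with h2 | h2
        · have e1 : J (Ici θ') = J (Ico θ' θSL) + J (Ici θSL) := hIciSplit θ' θSL h2
          have e2 := hQIio θ' θSL h2
          have e3 := hsplitQ (Ico θ' θSL) measurableSet_Ico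
          have e4 : 0 ≤ J (Ico θ' θSL \ {x : ℝ | x < θ ∧ c x θ ≤ 1}) :=
            hJpos _ (measurableSet_Ico.diff hQm) fun x hx => hx.1.2
          have e5 : J ({x : ℝ | x < θ ∧ c x θ ≤ 1} ∩ Ico θ' θSL) =
              J (Ico θ' θSL ∩ {x : ℝ | x < θ ∧ c x θ ≤ 1}) := by rw [inter_comm]
          linarith
        · have e1 : J (Ici θSL) = J (Ico θSL θ') + J (Ici θ') := hIciSplit θSL θ' h2.le
          have e2 := hQIio θSL θ' h2.le
          have e3 := hsplitQ (Ico θSL θ') measurableSet_Ico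
          have e4 : J (Ico θSL θ' \ {x : ℝ | x < θ ∧ c x θ ≤ 1}) ≤ 0 :=
            hJneg _ (measurableSet_Ico.diff hQm) fun x hx => hx.1.1
          have e5 : J ({x : ℝ | x < θ ∧ c x θ ≤ 1} ∩ Ico θSL θ') =
              J (Ico θSL θ' ∩ {x : ℝ | x < θ ∧ c x θ ≤ 1}) := by rw [inter_comm]
          linarith
      · rw [hSM2 θ θ' h1]
        have hSLθ' : θSL ≤ θ' := hSLθ.trans h1.le
        have e1 : J (Ici θSL) = J (Ico θSL θ') + J (Ici θ') := hIciSplit θSL θ' hSLθ'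
        have e2 : J {x : ℝ | x < θ ∧ c x θ ≤ 1} =
            J ({x : ℝ | x < θ ∧ c x θ ≤ 1} ∩ Iio θSL) +
              J ({x : ℝ | x < θ ∧ c x θ ≤ 1} ∩ Ici θSL) := by
          rw [← hJ_union _ _ (hQm.inter measurableSet_Ici)
            (disjoint_left.2 fun x hx hx2 => absurd (mem_Ici.1 hx2.2) (not_le.2 (mem_Iio.1 hx.2))),
            ← inter_union_distrib_left, Iio_union_Ici, inter_univ]
        have e3 := hsplitQ (Ico θSL θ') measurableSet_Ico
        have e4 : J (Ico θSL θ' \ {x : ℝ | x < θ ∧ c x θ ≤ 1}) ≤ 0 :=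
          hJneg _ (measurableSet_Ico.diff hQm) fun x hx => hx.1.1
        have e5 : {x : ℝ | x < θ ∧ c x θ ≤ 1} ∩ Ici θSL =
            Ico θSL θ' ∩ {x : ℝ | x < θ ∧ c x θ ≤ 1} := by
          ext x
          constructor
          · rintro ⟨hxQ, hxSL⟩; exact ⟨⟨hxSL, lt_trans hxQ.1 h1⟩, hxQ⟩
          · rintro ⟨hxI, hxQ⟩; exact ⟨hxQ, hxI.1⟩
        rw [e5] at e2
        linarith
  have hNSlt : nonStrategicRisk β μ θSL < nonStrategicRisk β μ θ' := by
    rw [hNS θSL, hNS θ']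
    linarith
  rw [mixRisk, mixRisk]
  have hp1 : 0 < p := hp.1
  have hp2 : 0 < 1 - p := by linarith [hp.2]
  have m1 := mul_lt_mul_of_pos_left hNSlt hp1
  have m2 := mul_le_mul_of_nonneg_left hsm hp2.le
  linarith
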